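/- Uniqueness of flip composites (combinatorial lemma): let G be a triangle-free graph, S(G) the free semigroup with relations in G, {E_a} W*-correspondences indexed by letters, and {f_{a,b}} a unitary flip system (unitary bimodule maps f_{a,b}: E_a ⊗ E_b → E_b ⊗ E_a with f_{a,b}* = f_{b,a} for each edge {a,b}). For every path p in the presentation graph H(s) define f_p as the composition of the maps I ⊗ f_{a,b} ⊗ I along its edges. Then for every cycle c in H(s), f_c is the identity map; equivalently, f_p depends only on the endpoints of p. -/

import Mathlib

/-- One application of a commutation relation encoded by the graph `G`. -/
def SwapRel {V : Type*} (G : SimpleGraph V) (r s : List V) : Prop :=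
  ∃ (w₁ w₂ : List V) (a b : V), G.Adj a b ∧ r = w₁ ++ a :: b :: w₂ ∧ s = w₁ ++ b :: a :: w₂

/-- Paths in the presentation graph `H(s)`: finite chains of elementary swaps. -/
inductive SwapPath {V : Type*} (G : SimpleGraph V) : List V → List V → Type _ where
  | nil (u : List V) : SwapPath G u u
  | cons {u v w : List V} (h : SwapRel G u v) (p : SwapPath G v w) : SwapPath G u w

/-- The composite of the elementary flip maps along a path. -/
noncomputable def pathMap {V : Type*} {G : SimpleGraph V} (EW : List V → Type*)
    [∀ w, NormedAddCommGroup (EW w)] [∀ w, InnerProductSpace ℂ (EW w)]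
    (F : ∀ u v : List V, SwapRel G u v → (EW u ≃ₗᵢ[ℂ] EW v)) :
    ∀ {u v : List V}, SwapPath G u v → (EW u ≃ₗᵢ[ℂ] EW v)
  | _, _, SwapPath.nil u => LinearIsometryEquiv.refl ℂ (EW u)
  | _, _, SwapPath.cons h p => (F _ _ h).trans (pathMap EW F p)

namespace Stmt16Aux

attribute [local instance] Classical.propDecidable

variable {V : Type*} {G : SimpleGraph V}

/-! ### Basic infrastructure on swap relations and paths -/

theorem srel (w₁ : List V) (a b : V) (w₂ : List V) (h : G.Adj a b) :
    SwapRel G (w₁ ++ a :: b :: w₂) (w₁ ++ b :: a :: w₂) :=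
  ⟨w₁, w₂, a, b, h, rfl, rfl⟩

theorem liftRel (c : V) {u v : List V} (h : SwapRel G u v) :
    SwapRel G (c :: u) (c :: v) := by
  obtain ⟨w₁, w₂, a, b, hab, rfl, rfl⟩ := h
  exact ⟨c :: w₁, w₂, a, b, hab, rfl, rfl⟩

def ptrans {u v w : List V} : SwapPath G u v → SwapPath G v w → SwapPath G u w
  | .nil _, q => q
  | .cons h p, q => .cons h (ptrans p q)

theorem ptrans_assoc {u v w z : List V} (p : SwapPath G u v) (q : SwapPath G v w)
    (r : SwapPath G w z) : ptrans (ptrans p q) r = ptrans p (ptrans q r) := by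
  induction p with
  | nil => rfl
  | cons h p ih => simp only [ptrans, ih]

def liftP (c : V) {u v : List V} : SwapPath G u v → SwapPath G (c :: u) (c :: v)
  | .nil _ => .nil _
  | .cons h p => .cons (liftRel c h) (liftP c p)

theorem liftP_ptrans (c : V) {u v w : List V} (p : SwapPath G u v) (q : SwapPath G v w) :
    liftP c (ptrans p q) = ptrans (liftP c p) (liftP c q) := by
  induction p with
  | nil => rfl
  | cons h p ih => simp only [ptrans, liftP, ih]

def liftL (x : List V) {u v : List V} (p : SwapPath G u v) : SwapPath G (x ++ u) (x ++ v) :=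
  match x with
  | [] => p
  | c :: x => liftP c (liftL x p)

def castT {u v v' : List V} (e : v = v') (p : SwapPath G u v) : SwapPath G u v' := e ▸ p

theorem castT_castT {u v v' v'' : List V} (e : v = v') (e' : v' = v'') (p : SwapPath G u v) :
    castT e' (castT e p) = castT (e.trans e') p := by subst e; subst e'; rfl

theorem cons_castT {u u' v v' : List V} (h : SwapRel G u' u) (e : v = v') (p : SwapPath G u v) :
    SwapPath.cons h (castT e p) = castT e (SwapPath.cons h p) := by subst e; rfl

theorem ptrans_castT {u v w w' : List V} (p : SwapPath G u v) (e : w = w') (q : SwapPath G v w) :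
    ptrans p (castT e q) = castT e (ptrans p q) := by subst e; rfl

theorem liftP_castT (c : V) {u v v' : List V} (e : v = v') (p : SwapPath G u v) :
    liftP c (castT e p) = castT (congrArg (c :: ·) e) (liftP c p) := by subst e; rfl

/-! ### Homotopy of swap paths -/

inductive Htp : {u v : List V} → SwapPath G u v → SwapPath G u v → Prop
  | refl {u v : List V} (p : SwapPath G u v) : Htp p p
  | symm {u v : List V} {p q : SwapPath G u v} : Htp p q → Htp q p
  | trans {u v : List V} {p q r : SwapPath G u v} : Htp p q → Htp q r → Htp p r
  | congr {u v w : List V} (h : SwapRel G u v) {p q : SwapPath G v w} :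
      Htp p q → Htp (.cons h p) (.cons h q)
  | cancel {u v w : List V} (h : SwapRel G u v) (h' : SwapRel G v u) (p : SwapPath G u w) :
      Htp (.cons h (.cons h' p)) p
  | square (w₁ w₂ w₃ : List V) (a b c d : V) {z : List V}
      (h₁ : SwapRel G (w₁ ++ a :: b :: w₂ ++ c :: d :: w₃) (w₁ ++ b :: a :: w₂ ++ c :: d :: w₃))
      (h₂ : SwapRel G (w₁ ++ b :: a :: w₂ ++ c :: d :: w₃) (w₁ ++ b :: a :: w₂ ++ d :: c :: w₃))
      (h₃ : SwapRel G (w₁ ++ a :: b :: w₂ ++ c :: d :: w₃) (w₁ ++ a :: b :: w₂ ++ d :: c :: w₃))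
      (h₄ : SwapRel G (w₁ ++ a :: b :: w₂ ++ d :: c :: w₃) (w₁ ++ b :: a :: w₂ ++ d :: c :: w₃))
      (p : SwapPath G (w₁ ++ b :: a :: w₂ ++ d :: c :: w₃) z) :
      Htp (.cons h₁ (.cons h₂ p)) (.cons h₃ (.cons h₄ p))

theorem Htp.ptransL {u v : List V} {p p' : SwapPath G u v} (H : Htp p p') :
    ∀ {w : List V} (q : SwapPath G v w), Htp (ptrans p q) (ptrans p' q) := by
  induction H with
  | refl p => exact fun q => .refl _
  | symm _ ih => exact fun q => .symm (ih q)
  | trans _ _ ih₁ ih₂ => exact fun q => .trans (ih₁ q) (ih₂ q)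
  | congr h _ ih => exact fun q => .congr h (ih q)
  | cancel h h' p => exact fun q => .cancel h h' (ptrans p q)
  | square w₁ w₂ w₃ a b c d h₁ h₂ h₃ h₄ p =>
      exact fun q => .square w₁ w₂ w₃ a b c d h₁ h₂ h₃ h₄ (ptrans p q)

theorem Htp.ptransR {u v : List V} (p : SwapPath G u v) :
    ∀ {w : List V} {q q' : SwapPath G v w}, Htp q q' → Htp (ptrans p q) (ptrans p q') := by
  induction p with
  | nil => exact fun H => H
  | cons h p ih => exact fun H => .congr h (ih H)

theorem Htp.liftc (c : V) {u v : List V} {p q : SwapPath G u v} (H : Htp p q) :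
    Htp (liftP c p) (liftP c q) := by
  induction H with
  | refl p => exact .refl _
  | symm _ ih => exact .symm ih
  | trans _ _ ih₁ ih₂ => exact .trans ih₁ ih₂
  | congr h _ ih => exact .congr (liftRel c h) ih
  | cancel h h' p => exact .cancel (liftRel c h) (liftRel c h') (liftP c p)
  | square w₁ w₂ w₃ a b c' d h₁ h₂ h₃ h₄ p =>
      exact .square (c :: w₁) w₂ w₃ a b c' d (liftRel c h₁) (liftRel c h₂) (liftRel c h₃)
        (liftRel c h₄) (liftP c p)

theorem Htp.castTc {u v v' : List V} (e : v = v') {p q : SwapPath G u v} (H : Htp p q) :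
    Htp (castT e p) (castT e q) := by subst e; exact H

/-- The exchange lemma: a swap at the front commutes past any path in the tail. -/
theorem exch {a b : V} (hab : G.Adj a b) :
    ∀ {t t' : List V} (p : SwapPath G t t') (h : SwapRel G (a :: b :: t) (b :: a :: t))
      (h' : SwapRel G (a :: b :: t') (b :: a :: t')),
      Htp (.cons h (liftP b (liftP a p))) (ptrans (liftP a (liftP b p)) (.cons h' (.nil _))) := by
  intro t t' p
  induction p with
  | nil u => intro h h'; exact .refl _
  | @cons t t₁ t' hr p ih =>
      obtain ⟨w₁, w₂, c, d, hcd, rfl, rfl⟩ := hr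
      intro h h'
      refine .trans (.square [] w₁ w₂ a b c d h
        (liftRel b (liftRel a (srel w₁ c d w₂ hcd)))
        (liftRel a (liftRel b (srel w₁ c d w₂ hcd)))
        (srel [] a b (w₁ ++ d :: c :: w₂) hab) (liftP b (liftP a p))) ?_
      exact .congr _ (ih _ h')
/-! ### Normal forms: reverse Foata insertion with steps of commuting letters -/

section Order
variable [LinearOrder V]

def flat : List (List V) → List V
  | [] => []
  | S :: L => S ++ flat L

noncomputable def ins (a : V) : List V → List V
  | [] => [a]
  | s :: S => if a ≤ s then a :: s :: S else s :: ins a S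

theorem mem_ins_of_mem {a x : V} : ∀ {S : List V}, x ∈ S → x ∈ ins a S := by
  intro S
  induction S with
  | nil => simp
  | cons s S ih =>
      intro hx
      simp only [ins]
      split
      · exact List.mem_cons_of_mem _ hx
      · rcases List.mem_cons.1 hx with h | h
        · exact h ▸ List.mem_cons_self ..
        · exact List.mem_cons_of_mem _ (ih h)

theorem ins_ne_nil (a : V) (S : List V) : ins a S ≠ [] := by
  cases S with
  | nil => simp [ins]
  | cons s S => simp only [ins]; split <;> simp

def adjAll (G : SimpleGraph V) (a : V) (S : List V) : Prop := ∀ x ∈ S, G.Adj a x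

theorem not_adjAll_ins {a b : V} {S : List V} (h : ¬ adjAll G b S) :
    ¬ adjAll G b (ins a S) :=
  fun hall => h (fun x hx => hall x (mem_ins_of_mem hx))

noncomputable def passStep (a : V) : (S : List V) → adjAll G a S → (t : List V) →
    SwapPath G (a :: (S ++ t)) (S ++ a :: t)
  | [], _, _ => .nil _
  | s :: S, h, t =>
      .cons (srel [] a s (S ++ t) (h s (List.mem_cons_self ..)))
        (liftP s (passStep a S (fun x hx => h x (List.mem_cons_of_mem _ hx)) t))

noncomputable def enterStep (a : V) : (S : List V) → adjAll G a S → (t : List V) →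
    SwapPath G (a :: (S ++ t)) (ins a S ++ t)
  | [], _, _ => .nil _
  | s :: S, h, t =>
      if hle : a ≤ s then
        castT (by simp only [ins, if_pos hle]; rfl) (.nil _)
      else
        castT (by simp only [ins, if_neg hle]; rfl)
          (.cons (srel [] a s (S ++ t) (h s (List.mem_cons_self ..)))
            (liftP s (enterStep a S (fun x hx => h x (List.mem_cons_of_mem _ hx)) t)))

noncomputable def finsertP (a : V) : (M : List (List V)) →
    (N : List (List V)) × SwapPath G (a :: flat M) (flat N)
  | [] => ⟨[[a]], .nil _⟩
  | [S] =>
      if hS : adjAll G a S then ⟨[ins a S], enterStep a S hS (flat ([] : List (List V)))⟩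
      else ⟨[[a], S], .nil _⟩
  | S :: S' :: L' =>
      if hS : adjAll G a S then
        if hS' : adjAll G a S' then
          ⟨S :: (finsertP a (S' :: L')).1,
            ptrans (passStep a S hS (flat (S' :: L'))) (liftL S (finsertP a (S' :: L')).2)⟩
        else ⟨ins a S :: S' :: L', enterStep a S hS (flat (S' :: L'))⟩
      else ⟨[a] :: S :: S' :: L', .nil _⟩

theorem finsertP_nil (a : V) : finsertP (G := G) a [] = ⟨[[a]], .nil _⟩ := rfl

theorem finsertP_single_pos (a : V) {S : List V} (hS : adjAll G a S) :
    finsertP (G := G) a [S] = ⟨[ins a S], enterStep a S hS (flat ([] : List (List V)))⟩ := by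
  simp only [finsertP, dif_pos hS]

theorem finsertP_neg (a : V) {S : List V} (hS : ¬ adjAll G a S) (L : List (List V)) :
    finsertP (G := G) a (S :: L) = ⟨[a] :: S :: L, .nil _⟩ := by
  cases L with
  | nil => simp only [finsertP, dif_neg hS]
  | cons S' L' => simp only [finsertP, dif_neg hS]

theorem finsertP_pass (a : V) {S S' : List V} {L' : List (List V)}
    (hS : adjAll G a S) (hS' : adjAll G a S') :
    finsertP (G := G) a (S :: S' :: L') = ⟨S :: (finsertP a (S' :: L')).1,
      ptrans (passStep a S hS (flat (S' :: L'))) (liftL S (finsertP a (S' :: L')).2)⟩ := by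
  simp only [finsertP, dif_pos hS, dif_pos hS']

theorem finsertP_enter (a : V) {S S' : List V} {L' : List (List V)}
    (hS : adjAll G a S) (hS' : ¬ adjAll G a S') :
    finsertP (G := G) a (S :: S' :: L') = ⟨ins a S :: S' :: L', enterStep a S hS (flat (S' :: L'))⟩ := by
  simp only [finsertP, dif_pos hS, dif_neg hS']

theorem finsertP_ne_nil (a : V) : ∀ (M : List (List V)),
    (∀ S ∈ M, S ≠ []) → ∀ S ∈ (finsertP (G := G) a M).1, S ≠ [] := by
  intro M
  induction M with
  | nil =>
      intro _ S hS
      simp only [finsertP_nil, List.mem_singleton] at hS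
      simp [hS]
  | cons S₀ L ih =>
      intro hne S hS
      by_cases hadj : adjAll G a S₀
      · cases L with
        | nil =>
            rw [finsertP_single_pos a hadj] at hS
            simp only [List.mem_singleton] at hS
            exact hS ▸ ins_ne_nil a S₀
        | cons S' L' =>
            by_cases hadj' : adjAll G a S'
            · rw [finsertP_pass a hadj hadj'] at hS
              rcases List.mem_cons.1 hS with h | h
              · exact h ▸ hne S₀ (List.mem_cons_self ..)
              · exact ih (fun T hT => hne T (List.mem_cons_of_mem _ hT)) S h
            · rw [finsertP_enter a hadj hadj'] at hS
              rcases List.mem_cons.1 hS with h | h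
              · exact h ▸ ins_ne_nil a S₀
              · exact hne S (List.mem_cons_of_mem _ h)
      · rw [finsertP_neg a hadj] at hS
        rcases List.mem_cons.1 hS with h | h
        · simp [h]
        · exact hne S h

/-! ### Commutation of two insertions for adjacent letters (triangle-free) -/

theorem adjAll_single {a b : V} (h : G.Adj a b) : adjAll G a [b] :=
  fun x hx => (List.mem_singleton.1 hx) ▸ h

theorem no_both (hG : G.CliqueFree 3) {a b : V} (hab : G.Adj a b) {S : List V} (hS : S ≠ [])
    (hA : adjAll G a S) (hB : adjAll G b S) : False := by
  obtain ⟨s, hs⟩ := List.exists_mem_of_ne_nil S hS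
  exact hG {a, b, s} (SimpleGraph.is3Clique_triple_iff.2 ⟨hab, hA s hs, hB s hs⟩)

theorem ins_pair {a b : V} (hne : a ≠ b) : ins a [b] = ins b [a] := by
  simp only [ins]
  rcases le_total a b with h | h
  · rw [if_pos h, if_neg (fun h' => hne (le_antisymm h h'))]
  · rw [if_neg (fun h' => hne (le_antisymm h' h)), if_pos h]

theorem comm_finsert (hG : G.CliqueFree 3) {a b : V} (hab : G.Adj a b)
    (M : List (List V)) (hne : ∀ S ∈ M, S ≠ []) :
    (finsertP (G := G) a (finsertP (G := G) b M).1).1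
      = (finsertP (G := G) b (finsertP (G := G) a M).1).1 := by
  have hba := hab.symm
  have hxa : adjAll G b [a] := adjAll_single hba
  have hxb : adjAll G a [b] := adjAll_single hab
  cases M with
  | nil =>
      rw [finsertP_nil a, finsertP_nil b]
      rw [finsertP_single_pos a hxb, finsertP_single_pos b hxa]
      dsimp only
      rw [ins_pair hab.ne]
  | cons S L =>
      have hSne : S ≠ [] := hne S (List.mem_cons_self ..)
      by_cases hA : adjAll G a S <;> by_cases hB : adjAll G b S
      · exact (no_both hG hab hSne hA hB).elim
      · -- a passes/enters S, b does not
        cases L with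
        | nil =>
            rw [finsertP_neg b hB, finsertP_single_pos a hA]
            rw [finsertP_pass a hxb hA, finsertP_single_pos a hA]
            rw [finsertP_neg b (not_adjAll_ins hB)]
        | cons S' L' =>
            by_cases hA' : adjAll G a S'
            · rw [finsertP_neg b hB, finsertP_pass a hA hA']
              rw [finsertP_pass a hxb hA, finsertP_pass a hA hA']
              rw [finsertP_neg b hB]
            · rw [finsertP_neg b hB, finsertP_enter a hA hA']
              rw [finsertP_pass a hxb hA, finsertP_enter a hA hA']
              rw [finsertP_neg b (not_adjAll_ins hB)]
      · -- b passes/enters S, a does not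
        cases L with
        | nil =>
            rw [finsertP_neg a hA, finsertP_single_pos b hB]
            rw [finsertP_pass b hxa hB, finsertP_single_pos b hB]
            rw [finsertP_neg a (not_adjAll_ins hA)]
        | cons S' L' =>
            by_cases hB' : adjAll G b S'
            · rw [finsertP_neg a hA, finsertP_pass b hB hB']
              rw [finsertP_pass b hxa hB, finsertP_pass b hB hB']
              rw [finsertP_neg a hA]
            · rw [finsertP_neg a hA, finsertP_enter b hB hB']
              rw [finsertP_pass b hxa hB, finsertP_enter b hB hB']
              rw [finsertP_neg a (not_adjAll_ins hA)]
      · -- neither passes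
        rw [finsertP_neg a hA, finsertP_neg b hB]
        rw [finsertP_enter a hxb hA, finsertP_enter b hxa hB]
        dsimp only
        rw [ins_pair hab.ne]

/-! ### Homotopies with a cast on one endpoint -/

end Order

def HtpC {u v v' : List V} (p : SwapPath G u v) (q : SwapPath G u v') : Prop :=
  ∃ e : v = v', Htp (castT e p) q

theorem Htp.toC {u v : List V} {p q : SwapPath G u v} (H : Htp p q) : HtpC p q := ⟨rfl, H⟩

theorem HtpC.transL {u v v' : List V} {p p' : SwapPath G u v} {q : SwapPath G u v'}
    (H : Htp p p') (H' : HtpC p' q) : HtpC p q := by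
  obtain ⟨e, H'⟩ := H'
  exact ⟨e, (H.castTc e).trans H'⟩

theorem HtpC.transR {u v v' : List V} {p : SwapPath G u v} {q q' : SwapPath G u v'}
    (H : HtpC p q) (H' : Htp q q') : HtpC p q' := by
  obtain ⟨e, H⟩ := H
  exact ⟨e, H.trans H'⟩

theorem HtpC.ptransR {u v w w' : List V} (p : SwapPath G u v) {q : SwapPath G v w}
    {q' : SwapPath G v w'} (H : HtpC q q') : HtpC (ptrans p q) (ptrans p q') := by
  obtain ⟨e, H⟩ := H
  exact ⟨e, by rw [← ptrans_castT]; exact Htp.ptransR p H⟩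

theorem HtpC.consC {u₀ u v v' : List V} (h : SwapRel G u₀ u) {p : SwapPath G u v}
    {q : SwapPath G u v'} (H : HtpC p q) : HtpC (.cons h p) (.cons h q) := by
  obtain ⟨e, H⟩ := H
  exact ⟨e, by rw [← cons_castT]; exact Htp.congr h H⟩

theorem HtpC.liftc (c : V) {u v v' : List V} {p : SwapPath G u v} {q : SwapPath G u v'}
    (H : HtpC p q) : HtpC (liftP c p) (liftP c q) := by
  obtain ⟨e, H⟩ := H
  exact ⟨congrArg (c :: ·) e, by rw [← liftP_castT c e]; exact Htp.liftc c H⟩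

section Order2
variable [LinearOrder V]

theorem ptrans_nil {u v : List V} (p : SwapPath G u v) : ptrans p (.nil v) = p := by
  induction p with
  | nil => rfl
  | cons h p ih => simp only [ptrans, ih]

/-- The key front-pair lemma: entering `b` before `[a]` vs entering `a` before `[b]`. -/
theorem enter_pair {a b : V} (hab : G.Adj a b) (t : List V)
    (h : SwapRel G (a :: b :: t) (b :: a :: t)) (pfb : adjAll G b [a]) (pfa : adjAll G a [b]) :
    HtpC (.cons h (enterStep b [a] pfb t)) (enterStep a [b] pfa t) := by
  have hba := hab.symm
  rcases le_total a b with hle | hle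
  · have hnb : ¬ b ≤ a := fun h' => hab.ne (le_antisymm hle h')
    refine ⟨by rw [ins_pair hab.ne.symm], ?_⟩
    simp only [enterStep]
    rw [dif_neg hnb, dif_pos hle]
    simp only [enterStep, liftP]
    rw [cons_castT, castT_castT]
    exact Htp.castTc _ (Htp.cancel h _ (.nil _))
  · have hna : ¬ a ≤ b := fun h' => hab.ne (le_antisymm h' hle)
    refine ⟨by rw [ins_pair hab.ne.symm], ?_⟩
    simp only [enterStep]
    rw [dif_pos hle, dif_neg hna]
    simp only [enterStep, liftP]
    rw [cons_castT, castT_castT]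
    exact Htp.refl _

/-- Key coherence: inserting `a` then `b` is homotopic to inserting `b` then `a`. -/
theorem insert_comm_htp (hG : G.CliqueFree 3) {a b : V} (hab : G.Adj a b)
    (M : List (List V)) (hne : ∀ S ∈ M, S ≠ [])
    (h : SwapRel G (a :: b :: flat M) (b :: a :: flat M)) :
    HtpC (.cons h (ptrans (liftP b (finsertP (G := G) a M).2)
            (finsertP (G := G) b (finsertP (G := G) a M).1).2))
         (ptrans (liftP a (finsertP (G := G) b M).2)
            (finsertP (G := G) a (finsertP (G := G) b M).1).2) := by
  have hba := hab.symm
  have hxa : adjAll G b [a] := adjAll_single hba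
  have hxb : adjAll G a [b] := adjAll_single hab
  cases M with
  | nil =>
      rw [finsertP_nil a, finsertP_nil b]
      dsimp only
      rw [finsertP_single_pos a hxb, finsertP_single_pos b hxa]
      dsimp only
      simp only [liftP, ptrans]
      exact enter_pair hab (flat ([] : List (List V))) h hxa hxb
  | cons S L =>
      have hSne : S ≠ [] := hne S (List.mem_cons_self ..)
      by_cases hA : adjAll G a S <;> by_cases hB : adjAll G b S
      · exact (no_both hG hab hSne hA hB).elim
      · -- a passes/enters S, b does not
        cases L with
        | nil =>
            rw [finsertP_single_pos a hA]
            dsimp only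
            rw [finsertP_neg b (not_adjAll_ins hB) ([] : List (List V))]
            rw [finsertP_neg b hB ([] : List (List V))]
            dsimp only
            rw [finsertP_pass a hxb hA]
            dsimp only
            rw [finsertP_single_pos a hA]
            dsimp only
            simp only [liftP, liftL, ptrans, ptrans_nil, passStep]
            erw [ptrans_nil]
            exact Htp.toC (Htp.refl _)
        | cons S' L' =>
            by_cases hA' : adjAll G a S'
            · rw [finsertP_pass a hA hA']
              dsimp only
              rw [finsertP_neg b hB ((finsertP (G := G) a (S' :: L')).1)]
              rw [finsertP_neg b hB (S' :: L')]
              dsimp only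
              rw [finsertP_pass a hxb hA]
              dsimp only
              rw [finsertP_pass a hA hA']
              dsimp only
              simp only [liftP, liftL, ptrans, ptrans_nil, passStep]
              erw [ptrans_nil]
              exact Htp.toC (Htp.refl _)
            · rw [finsertP_enter a hA hA']
              dsimp only
              rw [finsertP_neg b (not_adjAll_ins hB) (S' :: L')]
              rw [finsertP_neg b hB (S' :: L')]
              dsimp only
              rw [finsertP_pass a hxb hA]
              dsimp only
              rw [finsertP_enter a hA hA']
              dsimp only
              simp only [liftP, liftL, ptrans, ptrans_nil, passStep]
              erw [ptrans_nil]
              exact Htp.toC (Htp.refl _)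
      · -- b passes/enters S, a does not
        cases L with
        | nil =>
            rw [finsertP_single_pos b hB]
            dsimp only
            rw [finsertP_neg a (not_adjAll_ins hA) ([] : List (List V))]
            rw [finsertP_neg a hA ([] : List (List V))]
            dsimp only
            rw [finsertP_pass b hxa hB]
            dsimp only
            rw [finsertP_single_pos b hB]
            dsimp only
            simp only [liftP, liftL, ptrans, ptrans_nil, passStep]
            erw [ptrans_nil]
            exact Htp.toC (Htp.cancel h _ _)
        | cons S' L' =>
            by_cases hB' : adjAll G b S'
            · rw [finsertP_pass b hB hB']
              dsimp only
              rw [finsertP_neg a hA ((finsertP (G := G) b (S' :: L')).1)]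
              rw [finsertP_neg a hA (S' :: L')]
              dsimp only
              rw [finsertP_pass b hxa hB]
              dsimp only
              rw [finsertP_pass b hB hB']
              dsimp only
              simp only [liftP, liftL, ptrans, ptrans_nil, passStep]
              erw [ptrans_nil]
              exact Htp.toC (Htp.cancel h _ _)
            · rw [finsertP_enter b hB hB']
              dsimp only
              rw [finsertP_neg a (not_adjAll_ins hA) (S' :: L')]
              rw [finsertP_neg a hA (S' :: L')]
              dsimp only
              rw [finsertP_pass b hxa hB]
              dsimp only
              rw [finsertP_enter b hB hB']
              dsimp only
              simp only [liftP, liftL, ptrans, ptrans_nil, passStep]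
              erw [ptrans_nil]
              exact Htp.toC (Htp.cancel h _ _)
      · -- neither passes
        rw [finsertP_neg a hA L, finsertP_neg b hB L]
        dsimp only
        rw [finsertP_enter a hxb hA, finsertP_enter b hxa hB]
        dsimp only
        simp only [liftP, ptrans]
        exact enter_pair hab (flat (S :: L)) h hxa hxb

end Order2

/-! ### Normal form of a word, with its path -/

section Order3
variable [LinearOrder V]

noncomputable def nfP (G : SimpleGraph V) [LinearOrder V] :
    (w : List V) → (N : List (List V)) × SwapPath G w (flat N)
  | [] => ⟨[], .nil _⟩
  | a :: w => ⟨(finsertP a (nfP G w).1).1,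
      ptrans (liftP a (nfP G w).2) (finsertP a (nfP G w).1).2⟩

theorem nfP_ne (w : List V) : ∀ S ∈ (nfP G w).1, S ≠ [] := by
  induction w with
  | nil => intro S hS; simp [nfP] at hS
  | cons a w ih => exact finsertP_ne_nil a (nfP G w).1 ih

theorem nfswap (hG : G.CliqueFree 3) {a b : V} (hab : G.Adj a b) :
    ∀ (w₁ w₂ : List V), (nfP G (w₁ ++ a :: b :: w₂)).1 = (nfP G (w₁ ++ b :: a :: w₂)).1 := by
  intro w₁
  induction w₁ with
  | nil =>
      intro w₂
      simp only [List.nil_append, nfP]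
      exact comm_finsert hG hab (nfP G w₂).1 (nfP_ne w₂)
  | cons c w₁ ih =>
      intro w₂
      simp only [List.cons_append, nfP]
      exact congrArg (fun N => (finsertP (G := G) c N).fst) (ih w₂)

/-- The main combinatorial lemma: prepending any swap to the normal-form path of the
swapped word is homotopic to the normal-form path of the original word. -/
theorem mainL (hG : G.CliqueFree 3) :
    ∀ (w₁ w₂ : List V) (a b : V), G.Adj a b →
      ∀ (h : SwapRel G (w₁ ++ a :: b :: w₂) (w₁ ++ b :: a :: w₂)),
      HtpC (.cons h (nfP G (w₁ ++ b :: a :: w₂)).2) ((nfP G (w₁ ++ a :: b :: w₂)).2) := by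
  intro w₁
  induction w₁ with
  | nil =>
      intro w₂ a b hab h
      simp only [List.nil_append, nfP]
      rw [liftP_ptrans b, liftP_ptrans a, ptrans_assoc, ptrans_assoc]
      -- LHS: cons h (ptrans (liftP b (liftP a P)) Z_ba), where Z_ba is the two insertions
      refine HtpC.transL (p' := ptrans (liftP a (liftP b (nfP G w₂).2))
          (ptrans (.cons (srel [] a b (flat (nfP G w₂).1) hab) (.nil _))
            (ptrans (liftP b (finsertP (G := G) a (nfP G w₂).1).2)
              (finsertP (G := G) b (finsertP (G := G) a (nfP G w₂).1).1).2))) ?_ ?_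
      · have h₂ := exch (t := b :: a :: w₂) (t' := b :: a :: flat (nfP G w₂).1) hab
        have H := Htp.ptransL (exch hab (nfP G w₂).2 h
            (srel [] a b (flat (nfP G w₂).1) hab))
            (ptrans (liftP b (finsertP (G := G) a (nfP G w₂).1).2)
              (finsertP (G := G) b (finsertP (G := G) a (nfP G w₂).1).1).2)
        rw [ptrans_assoc] at H
        exact H
      · refine HtpC.ptransR _ ?_
        have K := insert_comm_htp hG hab (nfP G w₂).1 (nfP_ne w₂)
          (srel [] a b (flat (nfP G w₂).1) hab)
        exact K
  | cons c w₁ ih =>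
      intro w₂ a b hab h
      simp only [List.cons_append, nfP]
      rcases h1 : nfP G (w₁ ++ a :: b :: w₂) with ⟨Nu, Qu⟩
      rcases h2 : nfP G (w₁ ++ b :: a :: w₂) with ⟨Nv, Qv⟩
      have E : Nv = Nu := by
        have := nfswap hG hab w₁ w₂
        rw [h1, h2] at this
        exact this.symm
      subst E
      have IH : Htp (.cons (srel w₁ a b w₂ hab) Qv) Qu := by
        have := ih w₂ a b hab (srel w₁ a b w₂ hab)
        rw [h1, h2] at this
        obtain ⟨e, H⟩ := this
        exact H
      refine ⟨rfl, ?_⟩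
      show Htp (.cons h (ptrans (liftP c Qv) (finsertP c Nv).2))
        (ptrans (liftP c Qu) (finsertP c Nv).2)
      exact Htp.ptransL (Htp.liftc c IH) ((finsertP c Nv).2)

end Order3

/-! ### From homotopies to equality of composite maps -/

section Maps
variable [LinearOrder V]
variable (EW : List V → Type*) [∀ w, NormedAddCommGroup (EW w)] [∀ w, InnerProductSpace ℂ (EW w)]
variable (F : ∀ u v : List V, SwapRel G u v → (EW u ≃ₗᵢ[ℂ] EW v))

noncomputable def ecast : {u v : List V} → u = v → (EW u ≃ₗᵢ[ℂ] EW v)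
  | _, _, rfl => LinearIsometryEquiv.refl ℂ _

theorem ecast_ecast {u v w : List V} (e₁ : u = v) (e₂ : v = w) (x : EW u) :
    ecast EW e₂ (ecast EW e₁ x) = ecast EW (e₁.trans e₂) x := by
  subst e₁; subst e₂; rfl

theorem pathMap_castT {u v v' : List V} (e : v = v') (p : SwapPath G u v) :
    pathMap EW F (castT e p) = (pathMap EW F p).trans (ecast EW e) := by
  subst e
  exact (LinearIsometryEquiv.trans_refl _).symm

theorem pmHtp
    (hsymm : ∀ (u v : List V) (h : SwapRel G u v) (h' : SwapRel G v u),
      (F u v h).trans (F v u h') = LinearIsometryEquiv.refl ℂ (EW u))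
    (hcomm : ∀ (w₁ w₂ w₃ : List V) (a b c d : V)
      (h₁ : SwapRel G (w₁ ++ a :: b :: w₂ ++ c :: d :: w₃) (w₁ ++ b :: a :: w₂ ++ c :: d :: w₃))
      (h₂ : SwapRel G (w₁ ++ b :: a :: w₂ ++ c :: d :: w₃) (w₁ ++ b :: a :: w₂ ++ d :: c :: w₃))
      (h₃ : SwapRel G (w₁ ++ a :: b :: w₂ ++ c :: d :: w₃) (w₁ ++ a :: b :: w₂ ++ d :: c :: w₃))
      (h₄ : SwapRel G (w₁ ++ a :: b :: w₂ ++ d :: c :: w₃) (w₁ ++ b :: a :: w₂ ++ d :: c :: w₃)),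
      (F _ _ h₁).trans (F _ _ h₂) = (F _ _ h₃).trans (F _ _ h₄))
    {u v : List V} {p q : SwapPath G u v} (H : Htp p q) :
    pathMap EW F p = pathMap EW F q := by
  induction H with
  | refl p => rfl
  | symm _ ih => exact ih.symm
  | trans _ _ ih₁ ih₂ => exact ih₁.trans ih₂
  | congr h _ ih =>
      show (F _ _ h).trans _ = (F _ _ h).trans _
      rw [ih]
  | cancel h h' p =>
      show (F _ _ h).trans ((F _ _ h').trans (pathMap EW F p)) = pathMap EW F p
      ext x
      have hx := DFunLike.congr_fun (hsymm _ _ h h') x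
      simp only [LinearIsometryEquiv.trans_apply, LinearIsometryEquiv.coe_refl] at hx ⊢
      rw [hx]
      rfl
  | square w₁ w₂ w₃ a b c d h₁ h₂ h₃ h₄ p =>
      show (F _ _ h₁).trans ((F _ _ h₂).trans (pathMap EW F p))
          = (F _ _ h₃).trans ((F _ _ h₄).trans (pathMap EW F p))
      ext x
      have hx := DFunLike.congr_fun (hcomm w₁ w₂ w₃ a b c d h₁ h₂ h₃ h₄) x
      simp only [LinearIsometryEquiv.trans_apply] at hx ⊢
      rw [hx]

theorem Lmap
    (hsymm : ∀ (u v : List V) (h : SwapRel G u v) (h' : SwapRel G v u),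
      (F u v h).trans (F v u h') = LinearIsometryEquiv.refl ℂ (EW u))
    (hcomm : ∀ (w₁ w₂ w₃ : List V) (a b c d : V)
      (h₁ : SwapRel G (w₁ ++ a :: b :: w₂ ++ c :: d :: w₃) (w₁ ++ b :: a :: w₂ ++ c :: d :: w₃))
      (h₂ : SwapRel G (w₁ ++ b :: a :: w₂ ++ c :: d :: w₃) (w₁ ++ b :: a :: w₂ ++ d :: c :: w₃))
      (h₃ : SwapRel G (w₁ ++ a :: b :: w₂ ++ c :: d :: w₃) (w₁ ++ a :: b :: w₂ ++ d :: c :: w₃))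
      (h₄ : SwapRel G (w₁ ++ a :: b :: w₂ ++ d :: c :: w₃) (w₁ ++ b :: a :: w₂ ++ d :: c :: w₃)),
      (F _ _ h₁).trans (F _ _ h₂) = (F _ _ h₃).trans (F _ _ h₄))
    (hG : G.CliqueFree 3) {u v : List V} (h : SwapRel G u v)
    (e : flat (nfP G u).1 = flat (nfP G v).1) :
    (F u v h).trans (pathMap EW F (nfP G v).2)
      = (pathMap EW F (nfP G u).2).trans (ecast EW e) := by
  have h' := h
  obtain ⟨w₁, w₂, a, b, hab, rfl, rfl⟩ := h'
  obtain ⟨e', H⟩ := mainL hG w₁ w₂ a b hab (srel w₁ a b w₂ hab)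
  have H' := pmHtp EW F hsymm hcomm H
  rw [pathMap_castT] at H'
  ext x
  simp only [LinearIsometryEquiv.trans_apply]
  have hx := DFunLike.congr_fun H' x
  simp only [LinearIsometryEquiv.trans_apply] at hx
  rw [show pathMap EW F (SwapPath.cons (srel w₁ a b w₂ hab)
        (nfP G (w₁ ++ b :: a :: w₂)).2) x
      = pathMap EW F (nfP G (w₁ ++ b :: a :: w₂)).2
          (F _ _ (srel w₁ a b w₂ hab) x) from rfl] at hx
  rw [show (F _ _ h x : EW (w₁ ++ b :: a :: w₂))
      = F _ _ (srel w₁ a b w₂ hab) x from rfl]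
  rw [← hx, ecast_ecast]
  rfl

theorem final
    (hsymm : ∀ (u v : List V) (h : SwapRel G u v) (h' : SwapRel G v u),
      (F u v h).trans (F v u h') = LinearIsometryEquiv.refl ℂ (EW u))
    (hcomm : ∀ (w₁ w₂ w₃ : List V) (a b c d : V)
      (h₁ : SwapRel G (w₁ ++ a :: b :: w₂ ++ c :: d :: w₃) (w₁ ++ b :: a :: w₂ ++ c :: d :: w₃))
      (h₂ : SwapRel G (w₁ ++ b :: a :: w₂ ++ c :: d :: w₃) (w₁ ++ b :: a :: w₂ ++ d :: c :: w₃))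
      (h₃ : SwapRel G (w₁ ++ a :: b :: w₂ ++ c :: d :: w₃) (w₁ ++ a :: b :: w₂ ++ d :: c :: w₃))
      (h₄ : SwapRel G (w₁ ++ a :: b :: w₂ ++ d :: c :: w₃) (w₁ ++ b :: a :: w₂ ++ d :: c :: w₃)),
      (F _ _ h₁).trans (F _ _ h₂) = (F _ _ h₃).trans (F _ _ h₄))
    (hG : G.CliqueFree 3) : ∀ {u v : List V} (p : SwapPath G u v),
    (nfP G u).1 = (nfP G v).1 ∧
    ∀ e : flat (nfP G u).1 = flat (nfP G v).1,
      pathMap EW F p = ((pathMap EW F (nfP G u).2).trans (ecast EW e)).trans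
        (pathMap EW F (nfP G v).2).symm := by
  intro u v p
  induction p with
  | nil u =>
      refine ⟨rfl, fun e => ?_⟩
      have he : ecast EW e = LinearIsometryEquiv.refl ℂ (EW (flat (nfP G u).1)) := rfl
      rw [he, LinearIsometryEquiv.trans_refl, LinearIsometryEquiv.self_trans_symm]
      rfl
  | @cons u v' v h p ih =>
      have h' := h
      have hnf : (nfP G u).1 = (nfP G v').1 := by
        obtain ⟨w₁, w₂, a, b, hab, rfl, rfl⟩ := h'
        exact nfswap hG hab w₁ w₂
      refine ⟨hnf.trans ih.1, fun e => ?_⟩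
      have e₁ : flat (nfP G u).1 = flat (nfP G v').1 := congrArg flat hnf
      have e₂ : flat (nfP G v').1 = flat (nfP G v).1 := congrArg flat ih.1
      have hL := Lmap EW F hsymm hcomm hG h e₁
      show (F u v' h).trans (pathMap EW F p) = _
      rw [ih.2 e₂]
      ext x
      simp only [LinearIsometryEquiv.trans_apply]
      have hx := DFunLike.congr_fun hL x
      simp only [LinearIsometryEquiv.trans_apply] at hx
      rw [hx, ecast_ecast]

end Maps

end Stmt16Aux

/-- Uniqueness of flip composites: for a triangle-free graph `G` and a unitary flip system
(encoded by the unitaries `F` attached to the edges of the presentation graph, which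
invert edge-reversal and satisfy the disjoint-commutation squares), the map induced by any
cycle in the presentation graph is the identity; equivalently, the composite along a path
depends only on its endpoints. -/
theorem stmt16 {V : Type*} (G : SimpleGraph V) (hG : G.CliqueFree 3)
    (EW : List V → Type*) [∀ w, NormedAddCommGroup (EW w)] [∀ w, InnerProductSpace ℂ (EW w)]
    (F : ∀ u v : List V, SwapRel G u v → (EW u ≃ₗᵢ[ℂ] EW v))
    (hsymm : ∀ (u v : List V) (h : SwapRel G u v) (h' : SwapRel G v u),
      (F u v h).trans (F v u h') = LinearIsometryEquiv.refl ℂ (EW u))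
    (hcomm : ∀ (w₁ w₂ w₃ : List V) (a b c d : V)
      (h₁ : SwapRel G (w₁ ++ a :: b :: w₂ ++ c :: d :: w₃) (w₁ ++ b :: a :: w₂ ++ c :: d :: w₃))
      (h₂ : SwapRel G (w₁ ++ b :: a :: w₂ ++ c :: d :: w₃) (w₁ ++ b :: a :: w₂ ++ d :: c :: w₃))
      (h₃ : SwapRel G (w₁ ++ a :: b :: w₂ ++ c :: d :: w₃) (w₁ ++ a :: b :: w₂ ++ d :: c :: w₃))
      (h₄ : SwapRel G (w₁ ++ a :: b :: w₂ ++ d :: c :: w₃) (w₁ ++ b :: a :: w₂ ++ d :: c :: w₃)),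
      (F _ _ h₁).trans (F _ _ h₂) = (F _ _ h₃).trans (F _ _ h₄)) :
    (∀ (u : List V) (p : SwapPath G u u),
      pathMap EW F p = LinearIsometryEquiv.refl ℂ (EW u)) ∧
    (∀ (u v : List V) (p q : SwapPath G u v), pathMap EW F p = pathMap EW F q) := by
  letI : LinearOrder V := IsWellOrder.linearOrder WellOrderingRel
  constructor
  · intro u p
    obtain ⟨_, h2⟩ := Stmt16Aux.final EW F hsymm hcomm hG p
    rw [h2 rfl]
    have he : Stmt16Aux.ecast EW (rfl (a := Stmt16Aux.flat (Stmt16Aux.nfP G u).1))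
        = LinearIsometryEquiv.refl ℂ _ := rfl
    rw [he, LinearIsometryEquiv.trans_refl, LinearIsometryEquiv.self_trans_symm]
  · intro u v p q
    obtain ⟨h1, h2⟩ := Stmt16Aux.final EW F hsymm hcomm hG p
    obtain ⟨_, h2'⟩ := Stmt16Aux.final EW F hsymm hcomm hG q
    rw [h2 (congrArg Stmt16Aux.flat h1), h2' (congrArg Stmt16Aux.flat h1)]
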